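/- A finite group G is almost monomial if and only if, writing R_G = K[u₁,…,u_p] for the monomial algebra generated by the monomials corresponding to a generating set of M(G), for any j ≠ k ∈ {1,…,r} there exists i ∈ {1,…,p} such that x_j divides u_i and x_k does not divide u_i. -/

import Mathlib

open scoped Classical BigOperators

variable {G : Type} [Group G] [Fintype G]

noncomputable def inducedChar (H : Subgroup G) (lam : H →* ℂ) : G → ℂ :=
  fun g => (Nat.card H : ℂ)⁻¹ *
    ∑ x : G, if h : x⁻¹ * g * x ∈ H then lam ⟨x⁻¹ * g * x, h⟩ else 0

def IsMonomialChar (f : G → ℂ) : Prop :=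
  ∃ (H : Subgroup G) (lam : H →* ℂ), f = inducedChar H lam

def IsIrrChar (f : G → ℂ) : Prop :=
  ∃ V : FDRep ℂ G, CategoryTheory.Simple V ∧ f = V.character

noncomputable def innerChar (f g : G → ℂ) : ℂ :=
  (Nat.card G : ℂ)⁻¹ * ∑ x : G, f x * (starRingEnd ℂ) (g x)

/-- G is almost monomial: for any two distinct irreducible characters χ, ψ there exist a
subgroup H and a linear character λ of H with χ a constituent of λ^G and ψ not. -/
def IsAlmostMonomialGroup (G : Type) [Group G] [Fintype G] : Prop :=
  ∀ χ ψ : G → ℂ, IsIrrChar χ → IsIrrChar ψ → χ ≠ ψ →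
    ∃ (H : Subgroup G) (lam : H →* ℂ),
      innerChar (inducedChar H lam) χ ≠ 0 ∧ innerChar (inducedChar H lam) ψ = 0

section Aux

open CategoryTheory MonoidalCategory

set_option linter.unusedSectionVars false

/-- The one-dimensional representation of `H` attached to a linear character `lam`. -/
noncomputable def lamRep (H : Subgroup G) (lam : H →* ℂ) : Representation ℂ H ℂ where
  toFun h := lam h • LinearMap.id
  map_one' := by simp [Module.End.one_eq_id]
  map_mul' a b := by
    ext
    simp [mul_smul, mul_comm]

lemma char_lamRep (H : Subgroup G) (lam : H →* ℂ) (h : H) :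
    (FDRep.of (lamRep H lam)).character h = lam h := by
  have : (FDRep.of (lamRep H lam)).character h = LinearMap.trace ℂ ℂ (lamRep H lam h) := rfl
  rw [this]
  simp [lamRep, LinearMap.trace_id]

lemma char_res (H : Subgroup G) (V : FDRep ℂ G) (h : H) :
    (FDRep.of (V.ρ.comp H.subtype)).character h = V.character ↑h := by
  simp [FDRep.character, FDRep.of_ρ]

lemma conj_lam {H : Subgroup G} (lam : H →* ℂ) (h : H) :
    (starRingEnd ℂ) (lam h) = lam h⁻¹ := by
  have habs : ‖lam h‖ = 1 := by
    have hn : ‖lam h‖ ^ Fintype.card H = 1 := by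
      have : lam h ^ Fintype.card H = 1 := by rw [← map_pow, pow_card_eq_one, map_one]
      simpa using congrArg (‖·‖) this
    rcases lt_trichotomy (‖lam h‖) 1 with hlt | heq | hgt
    · have := pow_lt_one₀ (norm_nonneg _) hlt (Fintype.card_ne_zero (α := H))
      linarith [hn]
    · exact heq
    · have := one_lt_pow₀ hgt (Fintype.card_ne_zero (α := H))
      linarith [hn]
  rw [← Complex.inv_eq_conj habs]
  exact inv_eq_of_mul_eq_one_left (by rw [← map_mul, inv_mul_cancel, map_one])

/-- The `H`-average of `lam · χ(·⁻¹)` is a natural number (a dimension of invariants). -/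
lemma avg_eq_nat (H : Subgroup G) (lam : H →* ℂ) (V : FDRep ℂ G) :
    ∃ n : ℕ, (Nat.card H : ℂ)⁻¹ * ∑ h : H, lam h * V.character ((h : G)⁻¹) = n := by
  have hinv : Invertible ((Fintype.card H : ℂ)) :=
    invertibleOfNonzero (by exact_mod_cast Fintype.card_ne_zero)
  set W : FDRep ℂ H := FDRep.of (V.ρ.comp H.subtype) with hW
  set X : FDRep ℂ H := FDRep.of (lamRep H lam) ⊗ FDRep.of (Representation.dual W.ρ) with hX
  refine ⟨Module.finrank ℂ (Representation.invariants X.ρ), ?_⟩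
  have := FDRep.average_char_eq_finrank_invariants X
  have hchar : ∀ h : H, X.character h = lam h * V.character ((h : G)⁻¹) := by
    intro h
    rw [hX, FDRep.char_tensor]
    simp only [Pi.mul_apply, char_lamRep, FDRep.char_dual, hW, char_res]
    norm_cast
  rw [Finset.sum_congr rfl (fun h _ => hchar h)] at this
  rw [← this]

lemma dite_sum_eq (H : Subgroup G) (lam : H →* ℂ) (c : G → ℂ) :
    ∑ z : G, (if h : z ∈ H then (lam ⟨z, h⟩ : ℂ) else 0) * c z
      = ∑ h : H, lam h * c ↑h := by
  calc ∑ z : G, (if h : z ∈ H then (lam ⟨z, h⟩ : ℂ) else 0) * c z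
      = ∑ z ∈ Finset.univ.filter (· ∈ H),
          (if h : z ∈ H then (lam ⟨z, h⟩ : ℂ) else 0) * c z := by
        refine (Finset.sum_subset (Finset.filter_subset _ _) (fun z _ hz => ?_)).symm
        rw [Finset.mem_filter] at hz
        rw [dif_neg (fun hh => hz ⟨Finset.mem_univ z, hh⟩), zero_mul]
    _ = ∑ h : {z : G // z ∈ H}, (if hh : (h : G) ∈ H then (lam ⟨h, hh⟩ : ℂ) else 0) * c ↑h :=
        Finset.sum_subtype _ (by simp) _
    _ = ∑ h : H, lam h * c ↑h := by
        refine Finset.sum_congr rfl (fun h _ => ?_)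
        rw [dif_pos h.2]

/-- Frobenius-reciprocity style computation of the inner product of an induced character
with an actual character. -/
lemma innerChar_induced (H : Subgroup G) (lam : H →* ℂ) (V : FDRep ℂ G) :
    innerChar (inducedChar H lam) V.character
      = (Nat.card H : ℂ)⁻¹ * ∑ h : H, lam h * (starRingEnd ℂ) (V.character ↑h) := by
  unfold innerChar inducedChar
  have key : ∀ x : G,
      (∑ g : G, (if h : x⁻¹ * g * x ∈ H then (lam ⟨x⁻¹ * g * x, h⟩ : ℂ) else 0)
        * (starRingEnd ℂ) (V.character g))
      = ∑ h : H, lam h * (starRingEnd ℂ) (V.character ↑h) := by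
    intro x
    rw [← dite_sum_eq H lam (fun z => (starRingEnd ℂ) (V.character z))]
    refine Fintype.sum_equiv ((Equiv.mulLeft x⁻¹).trans (Equiv.mulRight x)) _ _ (fun z => ?_)
    simp only [Equiv.trans_apply, Equiv.coe_mulLeft, Equiv.coe_mulRight]
    have h2 : V.character (x⁻¹ * z * x) = V.character z := by
      have := FDRep.char_conj V z x⁻¹
      rwa [inv_inv] at this
    rw [h2]
    rfl
  have hswap : (∑ g : G, ((Nat.card H : ℂ)⁻¹ *
          ∑ x : G, if h : x⁻¹ * g * x ∈ H then (lam ⟨x⁻¹ * g * x, h⟩ : ℂ) else 0)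
          * (starRingEnd ℂ) (V.character g))
      = (Nat.card H : ℂ)⁻¹ * ((Nat.card G : ℂ) *
          ∑ h : H, lam h * (starRingEnd ℂ) (V.character ↑h)) := by
    calc (∑ g : G, ((Nat.card H : ℂ)⁻¹ *
            ∑ x : G, if h : x⁻¹ * g * x ∈ H then (lam ⟨x⁻¹ * g * x, h⟩ : ℂ) else 0)
            * (starRingEnd ℂ) (V.character g))
        = ∑ g : G, (Nat.card H : ℂ)⁻¹ *
            ∑ x : G, (if h : x⁻¹ * g * x ∈ H then (lam ⟨x⁻¹ * g * x, h⟩ : ℂ) else 0)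
            * (starRingEnd ℂ) (V.character g) := by
          refine Finset.sum_congr rfl (fun g _ => ?_)
          rw [mul_assoc, Finset.sum_mul]
      _ = (Nat.card H : ℂ)⁻¹ * ∑ g : G,
            ∑ x : G, (if h : x⁻¹ * g * x ∈ H then (lam ⟨x⁻¹ * g * x, h⟩ : ℂ) else 0)
            * (starRingEnd ℂ) (V.character g) := (Finset.mul_sum _ _ _).symm
      _ = (Nat.card H : ℂ)⁻¹ * ∑ x : G,
            ∑ g : G, (if h : x⁻¹ * g * x ∈ H then (lam ⟨x⁻¹ * g * x, h⟩ : ℂ) else 0)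
            * (starRingEnd ℂ) (V.character g) := by rw [Finset.sum_comm]
      _ = (Nat.card H : ℂ)⁻¹ * ((Nat.card G : ℂ) *
            ∑ h : H, lam h * (starRingEnd ℂ) (V.character ↑h)) := by
          rw [Finset.sum_congr rfl (fun x _ => key x), Finset.sum_const, Finset.card_univ,
            nsmul_eq_mul]
          simp [Nat.card_eq_fintype_card]
  rw [hswap]
  have hG : (Nat.card G : ℂ) ≠ 0 := by
    rw [Nat.card_eq_fintype_card]; exact_mod_cast Fintype.card_ne_zero
  field_simp

/-- The inner product of an induced (monomial) character with an irreducible character is a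
natural number. -/
lemma innerChar_induced_nat (H : Subgroup G) (lam : H →* ℂ) (V : FDRep ℂ G) :
    ∃ n : ℕ, innerChar (inducedChar H lam) V.character = n := by
  obtain ⟨n, hn⟩ := avg_eq_nat H lam V
  refine ⟨n, ?_⟩
  rw [innerChar_induced]
  have hconj : (starRingEnd ℂ) ((Nat.card H : ℂ)⁻¹ *
      ∑ h : H, lam h * (starRingEnd ℂ) (V.character ↑h)) = (n : ℂ) := by
    rw [map_mul, map_inv₀, map_natCast, map_sum, ← hn]
    congr 1
    calc ∑ h : H, (starRingEnd ℂ) (lam h * (starRingEnd ℂ) (V.character ↑h))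
        = ∑ h : H, lam h⁻¹ * V.character ↑h := by
          refine Finset.sum_congr rfl (fun h _ => ?_)
          rw [map_mul, Complex.conj_conj, conj_lam]
      _ = ∑ h : H, lam h * V.character ((h : G)⁻¹) := by
          refine Fintype.sum_equiv (Equiv.inv H) _ _ (fun h => ?_)
          simp
  calc (Nat.card ↥H : ℂ)⁻¹ * ∑ h : H, lam h * (starRingEnd ℂ) (V.character ↑h)
      = (starRingEnd ℂ) ((starRingEnd ℂ) ((Nat.card ↥H : ℂ)⁻¹ *
          ∑ h : H, lam h * (starRingEnd ℂ) (V.character ↑h))) := (Complex.conj_conj _).symm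
    _ = (starRingEnd ℂ) ((n : ℂ)) := by rw [hconj]
    _ = (n : ℂ) := map_natCast _ _

lemma innerChar_sum_smul {p : ℕ} (u : Fin p → (G → ℂ)) (c : Fin p → ℕ) (ψ : G → ℂ) :
    innerChar (∑ i, c i • u i) ψ = ∑ i, (c i : ℂ) * innerChar (u i) ψ := by
  unfold innerChar
  have happ : ∀ x : G, (∑ i, c i • u i) x = ∑ i, (c i : ℂ) * u i x := fun x => by
    simp [Finset.sum_apply]
  calc (Nat.card G : ℂ)⁻¹ * ∑ x : G, (∑ i, c i • u i) x * (starRingEnd ℂ) (ψ x)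
      = (Nat.card G : ℂ)⁻¹ * ∑ x : G, ∑ i, (c i : ℂ) * (u i x * (starRingEnd ℂ) (ψ x)) := by
        congr 1
        refine Finset.sum_congr rfl (fun x _ => ?_)
        rw [happ x, Finset.sum_mul]
        exact Finset.sum_congr rfl (fun i _ => by ring)
    _ = (Nat.card G : ℂ)⁻¹ * ∑ i, (c i : ℂ) * ∑ x : G, u i x * (starRingEnd ℂ) (ψ x) := by
        rw [Finset.sum_comm]
        congr 1
        exact Finset.sum_congr rfl (fun i _ => (Finset.mul_sum _ _ _).symm)
    _ = ∑ i, (c i : ℂ) * ((Nat.card G : ℂ)⁻¹ * ∑ x : G, u i x * (starRingEnd ℂ) (ψ x)) := by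
        rw [Finset.mul_sum]
        exact Finset.sum_congr rfl (fun i _ => by ring)

lemma exists_coeffs {p : ℕ} (u : Fin p → (G → ℂ)) {f : G → ℂ}
    (hf : f ∈ AddSubmonoid.closure (Set.range u)) :
    ∃ c : Fin p → ℕ, f = ∑ i, c i • u i := by
  induction hf using AddSubmonoid.closure_induction with
  | mem x hx =>
      obtain ⟨i, rfl⟩ := hx
      refine ⟨fun j => if j = i then 1 else 0, ?_⟩
      have hterm : ∀ j : Fin p, (if j = i then (1 : ℕ) else 0) • u j
          = if j = i then u j else 0 := fun j => by
        rw [ite_smul, one_smul, zero_smul]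
      rw [Finset.sum_congr rfl (fun j _ => hterm j), Finset.sum_ite_eq' Finset.univ i u]
      simp
  | zero => exact ⟨0, by simp⟩
  | add x y _ _ hx hy =>
      obtain ⟨c, rfl⟩ := hx
      obtain ⟨d, rfl⟩ := hy
      exact ⟨c + d, by simp [add_smul, Finset.sum_add_distrib]⟩

end Aux

/-- G is almost monomial iff, for monomial characters u₁,…,u_p generating
M(G), for any j ≠ k there exists i such that x_j ∣ u_i and x_k ∤ u_i (i.e. χ_j is a
constituent of u_i and χ_k is not). -/
theorem stmt_4 (p : ℕ) (u : Fin p → (G → ℂ))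
    (hu : ∀ i, IsMonomialChar (u i))
    (hgen : AddSubmonoid.closure (Set.range u) =
      AddSubmonoid.closure {f : G → ℂ | IsMonomialChar f}) :
    IsAlmostMonomialGroup G ↔
    ∀ χ ψ : G → ℂ, IsIrrChar χ → IsIrrChar ψ → χ ≠ ψ →
      ∃ i : Fin p, innerChar (u i) χ ≠ 0 ∧ innerChar (u i) ψ = 0 := by
  constructor
  · intro hAM χ ψ hχ hψ hne
    obtain ⟨H, lam, h1, h2⟩ := hAM χ ψ hχ hψ hne
    have hmem : inducedChar H lam ∈ AddSubmonoid.closure (Set.range u) := by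
      rw [hgen]
      exact AddSubmonoid.subset_closure ⟨H, lam, rfl⟩
    obtain ⟨c, hc⟩ := exists_coeffs u hmem
    rw [hc, innerChar_sum_smul] at h1 h2
    obtain ⟨ψV, _, rfl⟩ := hψ
    have hnat : ∀ i, ∃ n : ℕ, innerChar (u i) ψV.character = n := by
      intro i
      obtain ⟨Hi, lami, hui⟩ := hu i
      rw [hui]
      exact innerChar_induced_nat Hi lami ψV
    choose n hn using hnat
    have h2' : ((∑ i, c i * n i : ℕ) : ℂ) = 0 := by
      push_cast
      rw [← h2]
      exact Finset.sum_congr rfl (fun i _ => by rw [hn i])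
    have h2'' : ∀ i, c i * n i = 0 := by
      intro i
      exact (Finset.sum_eq_zero_iff.mp (by exact_mod_cast h2')) i (Finset.mem_univ i)
    have h1' : ∃ i, (c i : ℂ) * innerChar (u i) χ ≠ 0 := by
      by_contra hcon
      push_neg at hcon
      exact h1 (Finset.sum_eq_zero (fun i _ => hcon i))
    obtain ⟨i, hi⟩ := h1'
    have hci : c i ≠ 0 := by
      intro h
      rw [h] at hi
      simp at hi
    refine ⟨i, fun h => hi (by rw [h, mul_zero]), ?_⟩
    rw [hn i]
    have : n i = 0 := by
      rcases Nat.mul_eq_zero.mp (h2'' i) with h | h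
      · exact absurd h hci
      · exact h
    rw [this]
    norm_cast
  · intro hR χ ψ hχ hψ hne
    obtain ⟨i, h1, h2⟩ := hR χ ψ hχ hψ hne
    obtain ⟨H, lam, hui⟩ := hu i
    rw [hui] at h1 h2
    exact ⟨H, lam, h1, h2⟩
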